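/- arXiv:2208.03732 — 2 statements merged into one kernel-verified Lean document; each statement's English description precedes it below -/
import Mathlib

section
/- Let λ be a real number. For every natural number n and every real x, one has (x+1)_{n,λ} = Σ_{l=0}^{n} C(n,l) β_{l,λ}(x) · M_{n-l+1,λ}/(n-l+1), where M_{m,λ} = (2)_{m,λ} - (1)_{m,λ} are the dimorphic Mersenne numbers. -/
/-- The degenerate falling factorial `(x)_{n,λ} = x (x - λ) (x - 2λ) ⋯ (x - (n-1)λ)`,
with `(x)_{0,λ} = 1`. -/
def degFallingFactorial (lam x : ℝ) (n : ℕ) : ℝ :=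
  ∏ i ∈ Finset.range n, (x - i * lam)

/-- The degenerate exponential `e_λ^x(t) = ∑_{n=0}^∞ (x)_{n,λ} t^n/n!` as a formal
power series in `ℝ[[t]]`. -/
noncomputable def degExpSeries (lam x : ℝ) : PowerSeries ℝ :=
  PowerSeries.mk fun n => degFallingFactorial lam x n / (n.factorial : ℝ)

/-- The formal power series `(e_λ(t) - 1)/t`, whose constant term is `1`. -/
noncomputable def degExpSubOneDivT (lam : ℝ) : PowerSeries ℝ :=
  PowerSeries.mk fun n => degFallingFactorial lam 1 (n + 1) / ((n + 1).factorial : ℝ)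

/-- The generating series `(t/(e_λ(t)-1)) ⬝ e_λ^x(t) = ∑_{n=0}^∞ β_{n,λ}(x) t^n/n!` of the
degenerate Bernoulli polynomials, where `t/(e_λ(t)-1)` denotes the multiplicative inverse
of the series `(e_λ(t)-1)/t`. -/
noncomputable def degBernoulliSeries (lam x : ℝ) : PowerSeries ℝ :=
  (degExpSubOneDivT lam)⁻¹ * degExpSeries lam x

/-- The degenerate Bernoulli polynomial `β_{n,λ}(x)`, read off from its generating series. -/
noncomputable def degBernoulli (lam x : ℝ) (n : ℕ) : ℝ :=
  (n.factorial : ℝ) * PowerSeries.coeff n (degBernoulliSeries lam x)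

/-- The dimorphic Mersenne number `M_{n,λ} = (2)_{n,λ} - (1)_{n,λ}`. -/
def dimorphicMersenne (lam : ℝ) (n : ℕ) : ℝ :=
  degFallingFactorial lam 2 n - degFallingFactorial lam 1 n

lemma dff_succ (lam x : ℝ) (n : ℕ) :
    degFallingFactorial lam x (n+1) = degFallingFactorial lam x n * (x - n*lam) := by
  simp [degFallingFactorial, Finset.prod_range_succ]

lemma dff_vandermonde (lam x y : ℝ) (n : ℕ) :
    degFallingFactorial lam (x+y) n =
      ∑ k ∈ Finset.range (n+1), (n.choose k : ℝ) *
        (degFallingFactorial lam x k * degFallingFactorial lam y (n-k)) := by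
  induction n with
  | zero => simp [degFallingFactorial]
  | succ n ih =>
    rw [dff_succ, ih, Finset.sum_mul]
    rw [Finset.sum_range_succ' (fun k => ((n+1).choose k : ℝ) *
      (degFallingFactorial lam x k * degFallingFactorial lam y (n+1-k)))]
    have h1 : ∀ k ∈ Finset.range (n+1),
        (((n+1).choose (k+1) : ℝ)) * (degFallingFactorial lam x (k+1) * degFallingFactorial lam y (n+1-(k+1)))
        = (n.choose k : ℝ) * (degFallingFactorial lam x (k+1) * degFallingFactorial lam y (n-k))
          + (n.choose (k+1) : ℝ) * (degFallingFactorial lam x (k+1) * degFallingFactorial lam y (n-k)) := by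
      intro k hk
      have hnk : n+1-(k+1) = n-k := by omega
      rw [hnk, Nat.choose_succ_succ]
      push_cast
      ring
    rw [Finset.sum_congr rfl h1, Finset.sum_add_distrib]
    have h2 : (∑ k ∈ Finset.range (n+1), (n.choose (k+1) : ℝ) * (degFallingFactorial lam x (k+1) * degFallingFactorial lam y (n-k)))
        + ((n+1).choose 0 : ℝ) * (degFallingFactorial lam x 0 * degFallingFactorial lam y (n+1-0))
        = ∑ k ∈ Finset.range (n+1), (n.choose k : ℝ) * (degFallingFactorial lam x k * (degFallingFactorial lam y (n-k) * (y - ((n-k:ℕ):ℝ)*lam))) := by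
      rw [Finset.sum_range_succ' (fun k => (n.choose k : ℝ) * (degFallingFactorial lam x k * (degFallingFactorial lam y (n-k) * (y - ((n-k:ℕ):ℝ)*lam))))]
      congr 1
      · rw [Finset.sum_range_succ]
        simp only [Nat.choose_succ_self, Nat.cast_zero, zero_mul, add_zero]
        apply Finset.sum_congr rfl
        intro k hk
        rw [Finset.mem_range] at hk
        have h3 : n - (k+1) + 1 = n - k := by omega
        rw [show degFallingFactorial lam y (n-(k+1)) * (y - ((n-(k+1):ℕ):ℝ)*lam)
              = degFallingFactorial lam y (n-k) by rw [← dff_succ, h3]]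
      · simp [dff_succ, degFallingFactorial, Finset.prod_range_succ]
    rw [add_assoc, h2]
    rw [← Finset.sum_add_distrib]
    apply Finset.sum_congr rfl
    intro k hk
    rw [Finset.mem_range] at hk
    have hkn : k ≤ n := Nat.lt_succ_iff.mp hk
    have hc : ((n-k:ℕ):ℝ) = (n:ℝ) - k := by
      push_cast [hkn]; ring
    rw [dff_succ, hc]
    ring

lemma degExpSeries_mul (lam x y : ℝ) :
    degExpSeries lam x * degExpSeries lam y = degExpSeries lam (x+y) := by
  ext n
  rw [PowerSeries.coeff_mul, Finset.Nat.sum_antidiagonal_eq_sum_range_succ_mk]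
  simp only [degExpSeries, PowerSeries.coeff_mk]
  rw [dff_vandermonde, Finset.sum_div]
  apply Finset.sum_congr rfl
  intro k hk
  rw [Finset.mem_range] at hk
  have hkn : k ≤ n := Nat.lt_succ_iff.mp hk
  have hfac : ((n.choose k : ℝ)) * (k.factorial : ℝ) * ((n-k).factorial : ℝ) = (n.factorial : ℝ) := by
    rw [← Nat.cast_mul, ← Nat.cast_mul, Nat.choose_mul_factorial_mul_factorial hkn]
  have h1 : (k.factorial : ℝ) ≠ 0 := Nat.cast_ne_zero.mpr k.factorial_ne_zero
  have h2 : (((n-k)).factorial : ℝ) ≠ 0 := Nat.cast_ne_zero.mpr (n-k).factorial_ne_zero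
  have h3 : ((n).factorial : ℝ) ≠ 0 := Nat.cast_ne_zero.mpr n.factorial_ne_zero
  field_simp
  rw [← hfac]
  ring

lemma X_mul_degExpSubOneDivT (lam : ℝ) :
    PowerSeries.X * degExpSubOneDivT lam = degExpSeries lam 1 - 1 := by
  ext n
  cases n with
  | zero => simp [degExpSeries, degFallingFactorial]
  | succ m =>
    rw [PowerSeries.coeff_succ_X_mul]
    simp [degExpSubOneDivT, degExpSeries, PowerSeries.coeff_one]

/-- Generating series of Mersenne numbers. -/
noncomputable def mersenneSeries (lam : ℝ) : PowerSeries ℝ :=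
  PowerSeries.mk fun n => dimorphicMersenne lam (n+1) / ((n+1).factorial : ℝ)

lemma X_mul_mersenneSeries (lam : ℝ) :
    PowerSeries.X * mersenneSeries lam = degExpSeries lam 2 - degExpSeries lam 1 := by
  ext n
  cases n with
  | zero => simp [degExpSeries, degFallingFactorial]
  | succ m =>
    rw [PowerSeries.coeff_succ_X_mul]
    simp [mersenneSeries, degExpSeries, dimorphicMersenne, sub_div]

lemma mersenneSeries_eq (lam : ℝ) :
    mersenneSeries lam = degExpSubOneDivT lam * degExpSeries lam 1 := by
  have hX : (PowerSeries.X : PowerSeries ℝ) ≠ 0 := PowerSeries.X_ne_zero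
  apply mul_left_cancel₀ hX
  rw [X_mul_mersenneSeries, show PowerSeries.X * (degExpSubOneDivT lam * degExpSeries lam 1)
      = (PowerSeries.X * degExpSubOneDivT lam) * degExpSeries lam 1 by ring,
    X_mul_degExpSubOneDivT, sub_mul, one_mul, degExpSeries_mul]
  norm_num

lemma key_series (lam x : ℝ) :
    degBernoulliSeries lam x * mersenneSeries lam = degExpSeries lam (x+1) := by
  have hc : PowerSeries.constantCoeff (degExpSubOneDivT lam) ≠ 0 := by
    simp [degExpSubOneDivT, PowerSeries.constantCoeff_mk, degFallingFactorial]
  have hinv : (degExpSubOneDivT lam)⁻¹ * degExpSubOneDivT lam = 1 :=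
    PowerSeries.inv_mul_cancel _ hc
  rw [mersenneSeries_eq, degBernoulliSeries,
    show (degExpSubOneDivT lam)⁻¹ * degExpSeries lam x * (degExpSubOneDivT lam * degExpSeries lam 1)
      = ((degExpSubOneDivT lam)⁻¹ * degExpSubOneDivT lam) * (degExpSeries lam x * degExpSeries lam 1) by ring,
    hinv, one_mul, degExpSeries_mul]

/-- `(x+1)_{n,λ} = ∑_{l=0}^{n} C(n,l) β_{l,λ}(x) M_{n-l+1,λ}/(n-l+1)`. -/
theorem degFallingFactorial_succ_eq_sum (lam : ℝ) (n : ℕ) (x : ℝ) :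
    degFallingFactorial lam (x + 1) n =
      ∑ l ∈ Finset.range (n + 1),
        (n.choose l : ℝ) * degBernoulli lam x l *
          (dimorphicMersenne lam (n - l + 1) / (n - l + 1 : ℝ)) := by
  have h := congrArg (PowerSeries.coeff n) (key_series lam x)
  rw [PowerSeries.coeff_mul, Finset.Nat.sum_antidiagonal_eq_sum_range_succ_mk] at h
  have h3 : ((n).factorial : ℝ) ≠ 0 := Nat.cast_ne_zero.mpr n.factorial_ne_zero
  have hn : degFallingFactorial lam (x+1) n = (n.factorial : ℝ) *
      ∑ l ∈ Finset.range (n+1), PowerSeries.coeff l (degBernoulliSeries lam x) *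
        PowerSeries.coeff (n-l) (mersenneSeries lam) := by
    rw [h]
    simp only [degExpSeries, PowerSeries.coeff_mk]
    field_simp
  rw [hn, Finset.mul_sum]
  apply Finset.sum_congr rfl
  intro l hl
  rw [Finset.mem_range] at hl
  have hln : l ≤ n := Nat.lt_succ_iff.mp hl
  simp only [mersenneSeries, PowerSeries.coeff_mk, degBernoulli]
  have hfac : ((n.choose l : ℝ)) * (l.factorial : ℝ) * ((n-l).factorial : ℝ) = (n.factorial : ℝ) := by
    rw [← Nat.cast_mul, ← Nat.cast_mul, Nat.choose_mul_factorial_mul_factorial hln]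
  have hcast : ((n-l:ℕ):ℝ) = (n:ℝ) - l := by push_cast [hln]; ring
  have hfacs : (((n-l+1)).factorial : ℝ) = ((n:ℝ) - l + 1) * ((n-l).factorial : ℝ) := by
    rw [Nat.factorial_succ]
    push_cast [hln]
    ring
  have h1 : (((n-l)).factorial : ℝ) ≠ 0 := Nat.cast_ne_zero.mpr (n-l).factorial_ne_zero
  have h4 : ((n:ℝ) - l + 1) ≠ 0 := by
    rw [← hcast]; positivity
  rw [hfacs]
  field_simp
  rw [← hfac]
  ring
end

section
/- Let λ be a real number. For every integer n ≥ 1 and every real x, the degenerate Bernoulli polynomial satisfies β_{n,λ}(x) = (x+1)_{n,λ} - M_{n+1,λ}/(n+1) + Σ_{k=2}^{n} (-1)^k k! · B_{n,k}(β_{1,λ}(x), β_{2,λ}(x), …, β_{n-k+1,λ}(x)) + Σ_{j=1}^{n-1} Σ_{k=1}^{j} C(n,j) (x+1)_{n-j,λ} (-1)^k k! · B_{j,k}(β_{1,λ}(x), β_{2,λ}(x), …, β_{j-k+1,λ}(x)), where M_{m,λ} = (2)_{m,λ} - (1)_{m,λ} are the dimorphic Mersenne numbers and B_{j,k} denotes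 the incomplete Bell polynomial. -/
/-- The incomplete Bell polynomial `B_{n,k}(x_1, …, x_{n-k+1})`: the sum over all tuples of
nonnegative integers `l_1, …, l_{n-k+1}` with `l_1 + ⋯ + l_{n-k+1} = k` and
`l_1 + 2 l_2 + ⋯ + (n-k+1) l_{n-k+1} = n` of
`(n!/(l_1! ⋯ l_{n-k+1}!)) (x_1/1!)^{l_1} ⋯ (x_{n-k+1}/(n-k+1)!)^{l_{n-k+1}}`.
The arguments are given by `x : ℕ → ℝ`, with `x i` playing the role of `x_i`. -/
noncomputable def incompleteBell (n k : ℕ) (x : ℕ → ℝ) : ℝ :=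
  ∑ l ∈ (Fintype.piFinset fun _ : Fin (n - k + 1) => Finset.range (n + 1)).filter
      (fun l => (∑ i, l i) = k ∧ (∑ i, (i.1 + 1) * l i) = n),
    ((n.factorial : ℝ) / ∏ i, ((l i).factorial : ℝ)) *
      ∏ i, (x (i.1 + 1) / ((i.1 + 1).factorial : ℝ)) ^ l i

open Finset PowerSeries

lemma degFF_zero (lam x : ℝ) : degFallingFactorial lam x 0 = 1 := by
  simp [degFallingFactorial]

lemma degFF_succ (lam x : ℝ) (n : ℕ) :
    degFallingFactorial lam x (n + 1) = degFallingFactorial lam x n * (x - n * lam) := by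
  simp [degFallingFactorial, Finset.prod_range_succ]

lemma degFF_zero_left (lam : ℝ) (n : ℕ) (hn : 1 ≤ n) : degFallingFactorial lam 0 n = 0 :=
  Finset.prod_eq_zero (i := 0) (by simp; omega) (by simp)

lemma degFF_vandermonde (lam x y : ℝ) (n : ℕ) :
    degFallingFactorial lam (x + y) n =
      ∑ k ∈ range (n + 1),
        (n.choose k : ℝ) * degFallingFactorial lam x k * degFallingFactorial lam y (n - k) := by
  induction n with
  | zero => simp [degFF_zero]
  | succ n ih =>
    rw [degFF_succ, ih, Finset.sum_mul]
    have expand : ∀ k ∈ range (n + 1),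
        (n.choose k : ℝ) * degFallingFactorial lam x k * degFallingFactorial lam y (n - k) *
            (x + y - n * lam) =
          (n.choose k : ℝ) * degFallingFactorial lam x (k + 1) * degFallingFactorial lam y (n - k)
          + (n.choose k : ℝ) * degFallingFactorial lam x k *
              degFallingFactorial lam y (n - k + 1) := by
      intro k hk
      rw [mem_range, Nat.lt_succ_iff] at hk
      have hsplit : x + y - (n : ℝ) * lam =
          (x - k * lam) + (y - ((n - k : ℕ) : ℝ) * lam) := by
        rw [Nat.cast_sub hk]; ring
      rw [hsplit, mul_add, degFF_succ, degFF_succ]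
      ring
    rw [Finset.sum_congr rfl expand, Finset.sum_add_distrib]
    -- RHS peel
    rw [Finset.sum_range_succ' (fun k => ((n+1).choose k : ℝ) *
      degFallingFactorial lam x k * degFallingFactorial lam y (n + 1 - k))]
    have hch : ∀ k, (((n+1).choose (k+1) : ℕ) : ℝ) = (n.choose k : ℝ) + (n.choose (k+1) : ℝ) := by
      intro k; rw [Nat.choose_succ_succ]; push_cast; ring
    have hA : ∀ k ∈ range (n+1),
        ((n+1).choose (k+1) : ℝ) * degFallingFactorial lam x (k+1) *
            degFallingFactorial lam y (n + 1 - (k+1)) =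
          (n.choose k : ℝ) * degFallingFactorial lam x (k+1) * degFallingFactorial lam y (n - k)
          + (n.choose (k+1) : ℝ) * degFallingFactorial lam x (k+1) *
              degFallingFactorial lam y (n - k) := by
      intro k hk
      have : n + 1 - (k + 1) = n - k := by omega
      rw [this, hch]; ring
    rw [Finset.sum_congr rfl hA, Finset.sum_add_distrib]
    have hB : ∑ k ∈ range (n+1), (n.choose k : ℝ) * degFallingFactorial lam x k *
        degFallingFactorial lam y (n - k + 1) =
        ∑ k ∈ range (n+1), (n.choose (k+1) : ℝ) * degFallingFactorial lam x (k+1) *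
          degFallingFactorial lam y (n - k)
        + ((n+1).choose 0 : ℝ) * degFallingFactorial lam x 0 *
            degFallingFactorial lam y (n + 1 - 0) := by
      rw [Finset.sum_range_succ' (fun k => (n.choose k : ℝ) * degFallingFactorial lam x k *
        degFallingFactorial lam y (n - k + 1))]
      congr 1
      · rw [Finset.sum_range_succ]
        simp only [Nat.choose_succ_self, Nat.cast_zero, zero_mul]
        rw [add_zero]
        refine Finset.sum_congr rfl fun k hk => ?_
        rw [mem_range] at hk
        have : n - (k+1) + 1 = n - k := by omega
        rw [this]
      · simp
    rw [hB]
    ring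

lemma coeff_degExp (lam x : ℝ) (n : ℕ) :
    PowerSeries.coeff n (degExpSeries lam x) = degFallingFactorial lam x n / (n.factorial : ℝ) :=
  PowerSeries.coeff_mk _ _

lemma degExp_mul (lam x y : ℝ) :
    degExpSeries lam x * degExpSeries lam y = degExpSeries lam (x + y) := by
  ext n
  rw [PowerSeries.coeff_mul, coeff_degExp, Finset.Nat.sum_antidiagonal_eq_sum_range_succ_mk]
  rw [degFF_vandermonde, Finset.sum_div]
  refine Finset.sum_congr rfl fun k hk => ?_
  rw [mem_range, Nat.lt_succ_iff] at hk
  rw [coeff_degExp, coeff_degExp, Nat.cast_choose ℝ hk]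
  have h1 : (k.factorial : ℝ) ≠ 0 := Nat.cast_ne_zero.mpr (Nat.factorial_ne_zero k)
  have h2 : ((n - k).factorial : ℝ) ≠ 0 := Nat.cast_ne_zero.mpr (Nat.factorial_ne_zero _)
  have h3 : (n.factorial : ℝ) ≠ 0 := Nat.cast_ne_zero.mpr (Nat.factorial_ne_zero n)
  field_simp

lemma degExp_zero (lam : ℝ) : degExpSeries lam 0 = 1 := by
  ext n
  rw [coeff_degExp]
  cases n with
  | zero => simp [degFF_zero]
  | succ n => simp [degFF_zero_left lam (n+1) (by omega)]

lemma constCoeff_D (lam : ℝ) : PowerSeries.constantCoeff (degExpSubOneDivT lam) = 1 := by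
  have : PowerSeries.constantCoeff (degExpSubOneDivT lam)
      = PowerSeries.coeff 0 (degExpSubOneDivT lam) := by
    rw [PowerSeries.coeff_zero_eq_constantCoeff]
  rw [this, degExpSubOneDivT, PowerSeries.coeff_mk]
  simp [degFF_succ, degFF_zero]

lemma constCoeff_E (lam x : ℝ) : PowerSeries.constantCoeff (degExpSeries lam x) = 1 := by
  rw [← PowerSeries.coeff_zero_eq_constantCoeff, coeff_degExp]
  simp [degFF_zero]

lemma X_mul_D (lam : ℝ) :
    (PowerSeries.X : PowerSeries ℝ) * degExpSubOneDivT lam = degExpSeries lam 1 - 1 := by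
  ext n
  cases n with
  | zero =>
    simp only [map_sub, PowerSeries.coeff_zero_eq_constantCoeff, map_mul,
      PowerSeries.constantCoeff_X, zero_mul, constCoeff_E, map_one, sub_self]
  | succ n =>
    rw [PowerSeries.coeff_succ_X_mul, map_sub, coeff_degExp]
    rw [degExpSubOneDivT, PowerSeries.coeff_mk]
    simp [PowerSeries.coeff_one]

lemma D_inv_mul (lam : ℝ) :
    (degExpSubOneDivT lam)⁻¹ * degExpSubOneDivT lam = 1 := by
  rw [mul_comm]
  exact PowerSeries.mul_inv_cancel _ (by rw [constCoeff_D]; exact one_ne_zero)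

lemma constCoeff_B (lam x : ℝ) :
    PowerSeries.constantCoeff (degBernoulliSeries lam x) = 1 := by
  rw [degBernoulliSeries, map_mul, constCoeff_E, PowerSeries.constantCoeff_inv, constCoeff_D]
  norm_num

lemma B_inv (lam x : ℝ) :
    (degBernoulliSeries lam x)⁻¹ = degExpSubOneDivT lam * degExpSeries lam (-x) := by
  rw [PowerSeries.inv_eq_iff_mul_eq_one (by rw [constCoeff_B]; exact one_ne_zero)]
  rw [degBernoulliSeries]
  calc degExpSubOneDivT lam * degExpSeries lam (-x) *
        ((degExpSubOneDivT lam)⁻¹ * degExpSeries lam x)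
      = ((degExpSubOneDivT lam)⁻¹ * degExpSubOneDivT lam) *
          (degExpSeries lam (-x) * degExpSeries lam x) := by ring
    _ = 1 := by rw [D_inv_mul, degExp_mul]; simp [degExp_zero]

lemma key_coeff (lam x : ℝ) (n : ℕ) :
    PowerSeries.coeff n (degExpSeries lam (x + 1) * (degBernoulliSeries lam x)⁻¹) =
      dimorphicMersenne lam (n + 1) / ((n + 1).factorial : ℝ) := by
  rw [B_inv]
  have h1 : degExpSeries lam (x + 1) * (degExpSubOneDivT lam * degExpSeries lam (-x)) =
      degExpSubOneDivT lam * degExpSeries lam 1 := by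
    rw [mul_comm (degExpSubOneDivT lam) (degExpSeries lam (-x)), ← mul_assoc,
      degExp_mul]
    norm_num
    rw [mul_comm]
  rw [h1]
  have h2 : PowerSeries.coeff n (degExpSubOneDivT lam * degExpSeries lam 1) =
      PowerSeries.coeff (n + 1)
        ((PowerSeries.X : PowerSeries ℝ) * (degExpSubOneDivT lam * degExpSeries lam 1)) := by
    rw [PowerSeries.coeff_succ_X_mul]
  rw [h2, ← mul_assoc, X_mul_D, sub_mul, one_mul, degExp_mul]
  rw [map_sub, coeff_degExp, coeff_degExp]
  rw [dimorphicMersenne]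
  norm_num
  rw [sub_div]

lemma bell_coeff (n k : ℕ) (hk : 1 ≤ k) (hkn : k ≤ n) (a : ℕ → ℝ) (g : PowerSeries ℝ)
    (hg0 : PowerSeries.constantCoeff g = 0)
    (hg : ∀ m, 1 ≤ m → PowerSeries.coeff m g = a m / (m.factorial : ℝ)) :
    (n.factorial : ℝ) * PowerSeries.coeff n (g ^ k) =
      (k.factorial : ℝ) * incompleteBell n k a := by
  classical
  set N := n - k + 1 with hN
  set p : PowerSeries ℝ :=
    ∑ i ∈ Finset.range N, PowerSeries.C (a (i+1) / ((i+1).factorial : ℝ)) *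
      (PowerSeries.X : PowerSeries ℝ) ^ (i+1) with hp
  have coeff_p : ∀ m, PowerSeries.coeff m p =
      if 1 ≤ m ∧ m ≤ N then a m / (m.factorial : ℝ) else 0 := by
    intro m
    rw [hp, map_sum]
    simp only [PowerSeries.coeff_C_mul, PowerSeries.coeff_X_pow, mul_ite, mul_one, mul_zero]
    by_cases hm : 1 ≤ m ∧ m ≤ N
    · rw [if_pos hm, Finset.sum_eq_single (m - 1)]
      · rw [if_pos (by omega)]
        have h1 : m - 1 + 1 = m := by omega
        rw [h1]
      · intro b hb hbne
        rw [if_neg (by omega)]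
      · intro h
        rw [Finset.mem_range] at h
        omega
    · rw [if_neg hm]
      refine Finset.sum_eq_zero fun i hi => ?_
      rw [Finset.mem_range] at hi
      rw [if_neg (by omega)]
  have hXg : (PowerSeries.X : PowerSeries ℝ) ∣ g := PowerSeries.X_dvd_iff.mpr hg0
  have hp0 : PowerSeries.constantCoeff p = 0 := by
    rw [← PowerSeries.coeff_zero_eq_constantCoeff, coeff_p]
    simp
  have hXp : (PowerSeries.X : PowerSeries ℝ) ∣ p := PowerSeries.X_dvd_iff.mpr hp0
  have hXq : (PowerSeries.X : PowerSeries ℝ) ^ (k - 1) ∣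
      ∑ i ∈ Finset.range k, g ^ i * p ^ (k - 1 - i) := by
    refine Finset.dvd_sum fun i hi => ?_
    rw [Finset.mem_range] at hi
    have h1 : (PowerSeries.X : PowerSeries ℝ) ^ (k - 1) =
        PowerSeries.X ^ i * PowerSeries.X ^ (k - 1 - i) := by
      rw [← pow_add]
      congr 1
      omega
    rw [h1]
    exact mul_dvd_mul (pow_dvd_pow_of_dvd hXg i) (pow_dvd_pow_of_dvd hXp _)
  have htrunc : PowerSeries.coeff n (g ^ k) = PowerSeries.coeff n (p ^ k) := by
    have hgeom := geom_sum₂_mul g p k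
    have h0 : PowerSeries.coeff n (g ^ k - p ^ k) = 0 := by
      rw [← hgeom, PowerSeries.coeff_mul]
      refine Finset.sum_eq_zero fun uv huv => ?_
      rw [Finset.HasAntidiagonal.mem_antidiagonal] at huv
      by_cases hv : uv.2 ≤ N
      · have hz : PowerSeries.coeff uv.2 (g - p) = 0 := by
          rcases Nat.eq_zero_or_pos uv.2 with h | h
          · rw [h]
            simp [PowerSeries.coeff_zero_eq_constantCoeff, hg0, hp0]
          · rw [map_sub, coeff_p, hg _ h, if_pos ⟨h, hv⟩, sub_self]
        rw [hz, mul_zero]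
      · obtain ⟨h, hh⟩ := hXq
        rw [hh, PowerSeries.coeff_X_pow_mul', if_neg (by omega), zero_mul]
    rw [map_sub, sub_eq_zero] at h0
    exact h0
  have hmulti : PowerSeries.coeff n (p ^ k) =
      ∑ l ∈ (Finset.piAntidiag (Finset.range N) k).filter
          (fun l => ∑ i ∈ Finset.range N, (i + 1) * l i = n),
        (Nat.multinomial (Finset.range N) l : ℝ) *
          ∏ i ∈ Finset.range N, (a (i + 1) / ((i + 1).factorial : ℝ)) ^ l i := by
    rw [hp, Finset.sum_pow_eq_sum_piAntidiag, map_sum, Finset.sum_filter]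
    refine Finset.sum_congr rfl fun l hl => ?_
    have hprod : ∏ i ∈ Finset.range N,
        ((PowerSeries.C) (a (i + 1) / ((i + 1).factorial : ℝ)) *
          (PowerSeries.X : PowerSeries ℝ) ^ (i + 1)) ^ l i
        = PowerSeries.C (∏ i ∈ Finset.range N, (a (i + 1) / ((i + 1).factorial : ℝ)) ^ l i) *
          (PowerSeries.X : PowerSeries ℝ) ^ (∑ i ∈ Finset.range N, (i + 1) * l i) := by
      rw [map_prod, ← Finset.prod_pow_eq_pow_sum, ← Finset.prod_mul_distrib]
      refine Finset.prod_congr rfl fun i _ => ?_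
      rw [mul_pow, ← map_pow, ← pow_mul]
    rw [hprod, ← map_natCast (PowerSeries.C) (Nat.multinomial (Finset.range N) l),
      ← mul_assoc, ← map_mul, PowerSeries.coeff_C_mul, PowerSeries.coeff_X_pow]
    by_cases h : ∑ i ∈ Finset.range N, (i + 1) * l i = n
    · rw [if_pos h, if_pos h.symm, mul_one]
    · rw [if_neg h, if_neg (fun hh => h hh.symm), mul_zero]
  rw [htrunc, hmulti]
  simp only [incompleteBell]
  rw [← hN, Finset.mul_sum, Finset.mul_sum]
  refine Finset.sum_bij' (fun l _ => fun i : Fin N => l i.1)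
    (fun f _ => fun m => if h : m < N then f ⟨m, h⟩ else 0) ?_ ?_ ?_ ?_ ?_
  · intro l hl
    rw [Finset.mem_filter, Finset.mem_piAntidiag] at hl
    obtain ⟨⟨hsum, hsupp⟩, hwt⟩ := hl
    rw [Finset.mem_filter]
    refine ⟨Fintype.mem_piFinset.mpr fun i => ?_, ?_, ?_⟩
    · rw [Finset.mem_range]
      have h1 : l i.1 ≤ k := by
        rw [← hsum]
        exact Finset.single_le_sum (fun m _ => Nat.zero_le _)
          (Finset.mem_range.mpr i.isLt)
      omega
    · rw [← Finset.sum_range (fun m => l m), hsum]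
    · rw [← Finset.sum_range (fun m => (m + 1) * l m), hwt]
  · intro f hf
    rw [Finset.mem_filter, Fintype.mem_piFinset] at hf
    obtain ⟨hrange, hsum, hwt⟩ := hf
    rw [Finset.mem_filter, Finset.mem_piAntidiag]
    have e1 : ∀ (F : ℕ → ℕ → ℕ), ∑ m ∈ Finset.range N,
        F m (if h : m < N then f ⟨m, h⟩ else 0) = ∑ i : Fin N, F i.1 (f i) := by
      intro F
      rw [Finset.sum_range (fun m => F m (if h : m < N then f ⟨m, h⟩ else 0))]
      exact Finset.sum_congr rfl fun i _ => by rw [dif_pos i.isLt]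
    refine ⟨⟨?_, ?_⟩, ?_⟩
    · rw [e1 (fun _ v => v)]; exact hsum
    · intro m hm
      by_contra hmem
      rw [Finset.mem_range] at hmem
      rw [dif_neg hmem] at hm
      exact hm rfl
    · rw [e1 (fun m v => (m + 1) * v)]; exact hwt
  · intro l hl
    dsimp only
    rw [Finset.mem_filter, Finset.mem_piAntidiag] at hl
    funext m
    by_cases h : m < N
    · rw [dif_pos h]
    · rw [dif_neg h]
      by_contra hm
      have := hl.1.2 m (Ne.symm hm)
      rw [Finset.mem_range] at this
      exact h this
  · intro f hf
    dsimp only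
    funext i
    rw [dif_pos i.isLt]
  · intro l hl
    dsimp only
    rw [Finset.mem_filter, Finset.mem_piAntidiag] at hl
    obtain ⟨⟨hsum, hsupp⟩, hwt⟩ := hl
    have p1 : ∏ i : Fin N, ((l i.1).factorial : ℝ) =
        ∏ m ∈ Finset.range N, ((l m).factorial : ℝ) :=
      (Finset.prod_range (fun m => ((l m).factorial : ℝ))).symm
    have p2 : ∏ i : Fin N, (a (i.1 + 1) / ((i.1 + 1).factorial : ℝ)) ^ l i.1 =
        ∏ m ∈ Finset.range N, (a (m + 1) / ((m + 1).factorial : ℝ)) ^ l m :=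
      (Finset.prod_range (fun m => (a (m + 1) / ((m + 1).factorial : ℝ)) ^ l m)).symm
    rw [p1, p2]
    have hspec := Nat.multinomial_spec (Finset.range N) l
    rw [hsum] at hspec
    have hspecR : (∏ m ∈ Finset.range N, ((l m).factorial : ℝ)) *
        (Nat.multinomial (Finset.range N) l : ℝ) = (k.factorial : ℝ) := by
      exact_mod_cast congrArg (Nat.cast : ℕ → ℝ) hspec
    have hD : (∏ m ∈ Finset.range N, ((l m).factorial : ℝ)) ≠ 0 :=
      Finset.prod_ne_zero_iff.mpr fun m _ =>
        Nat.cast_ne_zero.mpr (Nat.factorial_ne_zero _)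
    generalize (∏ m ∈ Finset.range N, (a (m + 1) / ((m + 1).factorial : ℝ)) ^ l m) = P
    rw [← hspecR]
    field_simp

lemma coeff_g (lam x : ℝ) (m : ℕ) (hm : 1 ≤ m) :
    PowerSeries.coeff m (degBernoulliSeries lam x - 1) =
      degBernoulli lam x m / (m.factorial : ℝ) := by
  rw [map_sub, degBernoulli, PowerSeries.coeff_one, if_neg (by omega), sub_zero]
  rw [mul_div_cancel_left₀ _ (Nat.cast_ne_zero.mpr (Nat.factorial_ne_zero m))]

lemma constCoeff_g (lam x : ℝ) :
    PowerSeries.constantCoeff (degBernoulliSeries lam x - 1) = 0 := by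
  rw [map_sub, constCoeff_B, map_one, sub_self]

lemma sum_bell (lam x : ℝ) (j : ℕ) (hj : 1 ≤ j) :
    ∑ k ∈ Finset.Icc 1 j, (-1 : ℝ) ^ k * (k.factorial : ℝ) *
        incompleteBell j k (fun i => degBernoulli lam x i) =
      (j.factorial : ℝ) * PowerSeries.coeff j ((degBernoulliSeries lam x)⁻¹) := by
  set B := degBernoulliSeries lam x with hB
  set g : PowerSeries ℝ := B - 1 with hg
  have hg0 : PowerSeries.constantCoeff g = 0 := constCoeff_g lam x
  have hXg : (PowerSeries.X : PowerSeries ℝ) ∣ g := PowerSeries.X_dvd_iff.mpr hg0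
  have hBinv : B * B⁻¹ = 1 :=
    PowerSeries.mul_inv_cancel _ (by rw [constCoeff_B]; exact one_ne_zero)
  -- geometric identity
  have hgeo : (∑ i ∈ Finset.range (j + 1), (-g) ^ i) =
      B⁻¹ - B⁻¹ * (-g) ^ (j + 1) := by
    have h1 := geom_sum_mul (-g) (j + 1)
    have h2 : -g - 1 = -B := by rw [hg]; ring
    rw [h2] at h1
    have h3 : (∑ i ∈ Finset.range (j + 1), (-g) ^ i) * B = 1 - (-g) ^ (j + 1) := by
      linear_combination -h1
    calc (∑ i ∈ Finset.range (j + 1), (-g) ^ i)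
        = (∑ i ∈ Finset.range (j + 1), (-g) ^ i) * (B * B⁻¹) := by rw [hBinv, mul_one]
      _ = ((∑ i ∈ Finset.range (j + 1), (-g) ^ i) * B) * B⁻¹ := by ring
      _ = (1 - (-g) ^ (j + 1)) * B⁻¹ := by rw [h3]
      _ = B⁻¹ - B⁻¹ * (-g) ^ (j + 1) := by ring
  have hzero : PowerSeries.coeff j (B⁻¹ * (-g) ^ (j + 1)) = 0 := by
    have hdvd : (PowerSeries.X : PowerSeries ℝ) ^ (j + 1) ∣ B⁻¹ * (-g) ^ (j + 1) :=
      Dvd.dvd.mul_left (pow_dvd_pow_of_dvd ((dvd_neg).mpr hXg) (j + 1)) _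
    obtain ⟨h, hh⟩ := hdvd
    rw [hh, PowerSeries.coeff_X_pow_mul', if_neg (by omega), ]
  have hcoeff : PowerSeries.coeff j ((degBernoulliSeries lam x)⁻¹) =
      ∑ i ∈ Finset.range (j + 1), (-1 : ℝ) ^ i * PowerSeries.coeff j (g ^ i) := by
    have := congrArg (PowerSeries.coeff j) hgeo
    rw [map_sub, hzero, sub_zero, map_sum] at this
    rw [← hB, ← this]
    refine Finset.sum_congr rfl fun i _ => ?_
    have hpow : (-g) ^ i = ((-1 : ℝ) ^ i) • (g ^ i) := by
      rw [← smul_pow, neg_smul, one_smul]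
    rw [hpow, map_smul, smul_eq_mul]
  rw [hcoeff, Finset.mul_sum]
  rw [Finset.sum_range_succ' (fun i => (j.factorial : ℝ) *
    ((-1 : ℝ) ^ i * PowerSeries.coeff j (g ^ i)))]
  have h00 : (j.factorial : ℝ) * ((-1 : ℝ) ^ 0 * PowerSeries.coeff j (g ^ 0)) = 0 := by
    rw [pow_zero, pow_zero, PowerSeries.coeff_one, if_neg (by omega)]
    ring
  rw [h00, add_zero]
  have hIcc : ∑ k ∈ Finset.Icc 1 j, (-1 : ℝ) ^ k * (k.factorial : ℝ) *
      incompleteBell j k (fun i => degBernoulli lam x i) =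
      ∑ i ∈ Finset.range j, (-1 : ℝ) ^ (i + 1) * ((i + 1).factorial : ℝ) *
        incompleteBell j (i + 1) (fun i => degBernoulli lam x i) := by
    rw [show Finset.Icc 1 j = Finset.Ico 1 (j + 1) by rw [Finset.Ico_add_one_right_eq_Icc],
      Finset.sum_Ico_eq_sum_range]
    simp only [Nat.add_sub_cancel]
    exact Finset.sum_congr rfl fun i _ => by rw [Nat.add_comm 1 i]
  rw [hIcc]
  refine Finset.sum_congr rfl fun i hi => ?_
  rw [Finset.mem_range] at hi
  have hb := bell_coeff j (i + 1) (by omega) (by omega)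
    (fun m => degBernoulli lam x m) g hg0 (fun m hm => coeff_g lam x m hm)
  linear_combination ((-1 : ℝ) ^ i) * hb

lemma expand_coeff (lam x : ℝ) (n : ℕ) :
    (n.factorial : ℝ) * PowerSeries.coeff n
        (degExpSeries lam (x + 1) * (degBernoulliSeries lam x)⁻¹) =
      ∑ j ∈ Finset.range (n + 1), (n.choose j : ℝ) * degFallingFactorial lam (x + 1) (n - j) *
        ((j.factorial : ℝ) * PowerSeries.coeff j ((degBernoulliSeries lam x)⁻¹)) := by
  rw [PowerSeries.coeff_mul, Finset.Nat.sum_antidiagonal_eq_sum_range_succ_mk, Finset.mul_sum]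
  rw [← Finset.sum_range_reflect (fun j => (n.choose j : ℝ) *
    degFallingFactorial lam (x + 1) (n - j) *
    ((j.factorial : ℝ) * PowerSeries.coeff j ((degBernoulliSeries lam x)⁻¹))) (n + 1)]
  refine Finset.sum_congr rfl fun k hk => ?_
  rw [Finset.mem_range, Nat.lt_succ_iff] at hk
  have h1 : n + 1 - 1 - k = n - k := by omega
  have h2 : n - (n - k) = k := by omega
  rw [h1, h2, Nat.choose_symm hk, coeff_degExp, Nat.cast_choose ℝ hk]
  have hk1 : (k.factorial : ℝ) ≠ 0 := Nat.cast_ne_zero.mpr (Nat.factorial_ne_zero _)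
  have hk2 : ((n - k).factorial : ℝ) ≠ 0 := Nat.cast_ne_zero.mpr (Nat.factorial_ne_zero _)
  field_simp

/-- Theorem 3: for `n ≥ 1` and any `x`,
`β_{n,λ}(x) = (x+1)_{n,λ} - M_{n+1,λ}/(n+1)
+ ∑_{k=2}^{n} (-1)^k k! B_{n,k}(β_{1,λ}(x), …, β_{n-k+1,λ}(x))
+ ∑_{j=1}^{n-1} ∑_{k=1}^{j} C(n,j) (x+1)_{n-j,λ} (-1)^k k!
B_{j,k}(β_{1,λ}(x), …, β_{j-k+1,λ}(x))`. -/
theorem degBernoulli_eq_dimorphicMersenne_sum (lam : ℝ) (n : ℕ) (hn : 1 ≤ n) (x : ℝ) :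
    degBernoulli lam x n =
      degFallingFactorial lam (x + 1) n - dimorphicMersenne lam (n + 1) / (n + 1 : ℝ) +
        (∑ k ∈ Finset.Icc 2 n,
          (-1 : ℝ) ^ k * (k.factorial : ℝ) *
            incompleteBell n k (fun i => degBernoulli lam x i)) +
        ∑ j ∈ Finset.Icc 1 (n - 1), ∑ k ∈ Finset.Icc 1 j,
          (n.choose j : ℝ) * degFallingFactorial lam (x + 1) (n - j) *
            (-1 : ℝ) ^ k * (k.factorial : ℝ) *
              incompleteBell j k (fun i => degBernoulli lam x i) := by
  have hB1 : incompleteBell n 1 (fun i => degBernoulli lam x i) = degBernoulli lam x n := by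
    have hb := bell_coeff n 1 le_rfl hn (fun m => degBernoulli lam x m)
      (degBernoulliSeries lam x - 1) (constCoeff_g lam x) (fun m hm => coeff_g lam x m hm)
    rw [pow_one, coeff_g lam x n hn, Nat.factorial_one, Nat.cast_one, one_mul] at hb
    rw [← hb, mul_div_cancel₀ _ (Nat.cast_ne_zero.mpr (Nat.factorial_ne_zero n))]
  have hc0 : ((Nat.factorial 0 : ℕ) : ℝ) *
      PowerSeries.coeff 0 ((degBernoulliSeries lam x)⁻¹) = 1 := by
    simp only [Nat.factorial_zero, Nat.cast_one, one_mul,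
      PowerSeries.coeff_zero_eq_constantCoeff]
    rw [PowerSeries.constantCoeff_inv, constCoeff_B]
    norm_num
  have hkey : ∑ j ∈ Finset.range (n + 1), (n.choose j : ℝ) *
      degFallingFactorial lam (x + 1) (n - j) *
        ((j.factorial : ℝ) * PowerSeries.coeff j ((degBernoulliSeries lam x)⁻¹)) =
      dimorphicMersenne lam (n + 1) / ((n : ℝ) + 1) := by
    rw [← expand_coeff, key_coeff, Nat.factorial_succ]
    push_cast
    have h1 : ((n : ℝ) + 1) ≠ 0 := by positivity
    have h2 : ((n.factorial : ℕ) : ℝ) ≠ 0 := Nat.cast_ne_zero.mpr (Nat.factorial_ne_zero n)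
    field_simp
  have hsplit : Finset.range (n + 1) =
      insert 0 (insert n (Finset.Icc 1 (n - 1))) := by
    ext m
    simp only [Finset.mem_range, Finset.mem_insert, Finset.mem_Icc]
    omega
  rw [hsplit] at hkey
  rw [Finset.sum_insert (by simp only [Finset.mem_insert, Finset.mem_Icc]; omega),
    Finset.sum_insert (by simp only [Finset.mem_Icc]; omega)] at hkey
  rw [Nat.choose_zero_right, Nat.sub_zero, Nat.choose_self, Nat.sub_self, degFF_zero,
    hc0, Nat.cast_one, one_mul, mul_one] at hkey
  have hIcc1n : Finset.Icc 1 n = insert 1 (Finset.Icc 2 n) := by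
    ext m
    simp only [Finset.mem_insert, Finset.mem_Icc]
    omega
  have hSn := sum_bell lam x n hn
  rw [hIcc1n, Finset.sum_insert (by simp only [Finset.mem_Icc]; omega)] at hSn
  rw [pow_one, Nat.factorial_one, Nat.cast_one, mul_one, hB1] at hSn
  have hdouble : ∑ j ∈ Finset.Icc 1 (n - 1), ∑ k ∈ Finset.Icc 1 j,
      (n.choose j : ℝ) * degFallingFactorial lam (x + 1) (n - j) *
        (-1 : ℝ) ^ k * (k.factorial : ℝ) *
          incompleteBell j k (fun i => degBernoulli lam x i) =
      ∑ j ∈ Finset.Icc 1 (n - 1), (n.choose j : ℝ) *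
        degFallingFactorial lam (x + 1) (n - j) *
          ((j.factorial : ℝ) * PowerSeries.coeff j ((degBernoulliSeries lam x)⁻¹)) := by
    refine Finset.sum_congr rfl fun j hj => ?_
    rw [Finset.mem_Icc] at hj
    rw [← sum_bell lam x j hj.1, Finset.mul_sum]
    refine Finset.sum_congr rfl fun k _ => ?_
    ring
  rw [hdouble]
  linarith [hkey, hSn]
end
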